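/- Let n ≥ 1 and k ≥ 1. An element of ℤ/2nℤ is called odd if its image under the natural reduction homomorphism ℤ/2nℤ → ℤ/2ℤ is 1. Consider the set of triples (f, c, ε) where (f, c) is a k-colored perfect matching on ℤ/2nℤ such that x + f(x) is odd for every x ∈ ℤ/2nℤ, and ε ∈ ℤ/2ℤ. The additive group ℤ/2nℤ acts on this set by h·(f, c, ε) = (x ↦ f(x − h) + h, x ↦ c(x − h), ε + h̄), where h̄ ∈ ℤ/2ℤ is the reduction of h. Then the number N of orbits of this action satisfies n·N = Σ_{d | n} φ(d)·(n/d)!·d^{n/d}·k^{n/d}, the sum being over all positive divisors d of n. -/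

import Mathlib

set_option linter.unusedSectionVars false
set_option linter.unusedVariables false

/-- Signed `k`-colored perfect matchings on `ℤ/2nℤ` whose pairs `{x, f x}` each consist
of one even and one odd element (i.e. `x + f x` reduces to `1` in `ℤ/2ℤ`), together with
a sign `ε ∈ ℤ/2ℤ`. -/
def SgnColMatch (n k : ℕ) : Type :=
  {t : (ZMod (2 * n) → ZMod (2 * n)) × (ZMod (2 * n) → Fin k) × ZMod 2 //
    (∀ x, t.1 (t.1 x) = x) ∧ (∀ x, t.1 x ≠ x) ∧ (∀ x, t.2.1 (t.1 x) = t.2.1 x) ∧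
    (∀ x, ZMod.castHom (dvd_mul_right 2 n) (ZMod 2) (x + t.1 x) = 1)}

namespace S19
variable {n k : ℕ}

abbrev pr (n : ℕ) : ZMod (2 * n) →+* ZMod 2 := ZMod.castHom (dvd_mul_right 2 n) (ZMod 2)

lemma pr_add_self (x : ZMod (2*n)) : pr n x + pr n x = 0 := by
  have : (2 : ZMod 2) = 0 := by decide
  calc pr n x + pr n x = 2 * pr n x := by ring
  _ = 0 := by rw [this, zero_mul]

def act (h : ZMod (2*n)) (m : SgnColMatch n k) : SgnColMatch n k :=
  ⟨(fun x => m.1.1 (x - h) + h, fun x => m.1.2.1 (x - h), m.1.2.2 + pr n h), by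
    obtain ⟨⟨f, c, ε⟩, h1, h2, h3, h4⟩ := m
    simp only at h1 h2 h3 h4
    refine ⟨fun x => ?_, fun x => ?_, fun x => ?_, fun x => ?_⟩ <;> simp only
    · rw [add_sub_cancel_right, h1, sub_add_cancel]
    · intro hc
      exact h2 (x - h) (by rw [eq_sub_iff_add_eq]; exact hc)
    · rw [add_sub_cancel_right, h3]
    · have : x + (f (x - h) + h) = ((x - h) + f (x - h)) + (h + h) := by ring
      rw [this, map_add, h4, map_add, pr_add_self, add_zero]⟩

instance : AddAction (ZMod (2*n)) (SgnColMatch n k) where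
  vadd := act
  zero_vadd m := Subtype.ext (by
    show (fun x => m.1.1 (x - 0) + 0, fun x => m.1.2.1 (x - 0), m.1.2.2 + pr n 0) = m.1
    simp)
  add_vadd g h m := Subtype.ext (by
    show (fun x => m.1.1 (x - (g + h)) + (g + h), fun x => m.1.2.1 (x - (g + h)),
        m.1.2.2 + pr n (g + h))
      = (fun x => m.1.1 (x - g - h) + h + g, fun x => m.1.2.1 (x - g - h),
        m.1.2.2 + pr n h + pr n g)
    refine Prod.ext (funext fun x => ?_) (Prod.ext (funext fun x => ?_) ?_) <;>
      simp only [sub_add_eq_sub_sub, map_add] <;> ring)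

lemma vadd_def (h : ZMod (2*n)) (m : SgnColMatch n k) :
    h +ᵥ m = act h m := rfl


section EvOd
variable [NeZero n]

instance : NeZero (2 * n) := ⟨by have := NeZero.ne n; omega⟩

def ev (a : ZMod n) : ZMod (2 * n) := ((2 * a.val : ℕ) : ZMod (2 * n))
def od (a : ZMod n) : ZMod (2 * n) := ((2 * a.val + 1 : ℕ) : ZMod (2 * n))
def hf (x : ZMod (2 * n)) : ZMod n := ((x.val / 2 : ℕ) : ZMod n)

lemma ev_val (a : ZMod n) : (ev a).val = 2 * a.val := by
  have := a.val_lt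
  exact ZMod.val_cast_of_lt (by omega)

lemma od_val (a : ZMod n) : (od a).val = 2 * a.val + 1 := by
  have := a.val_lt
  exact ZMod.val_cast_of_lt (by omega)

lemma hf_ev (a : ZMod n) : hf (ev a) = a := by
  rw [hf, ev_val]
  simp [Nat.mul_div_cancel_left, ZMod.natCast_rightInverse a]

lemma hf_od (a : ZMod n) : hf (od a) = a := by
  rw [hf, od_val]
  have : (2 * a.val + 1) / 2 = a.val := by omega
  rw [this, ZMod.natCast_rightInverse a]

omit [NeZero n] in
lemma pr_natCast (t : ℕ) : pr n ((t : ℕ) : ZMod (2*n)) = ((t : ℕ) : ZMod 2) :=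
  map_natCast _ t

lemma two_zmod2 : ((2 : ℕ) : ZMod 2) = 0 := by decide

lemma pr_ev (a : ZMod n) : pr n (ev a) = 0 := by
  rw [ev, pr_natCast, Nat.cast_mul, two_zmod2, zero_mul]

lemma pr_od (a : ZMod n) : pr n (od a) = 1 := by
  rw [od, pr_natCast, Nat.cast_add, Nat.cast_mul, Nat.cast_one, two_zmod2, zero_mul, zero_add]

lemma pr_val (x : ZMod (2*n)) : pr n x = ((x.val : ℕ) : ZMod 2) := by
  conv_lhs => rw [← ZMod.natCast_rightInverse x]
  exact pr_natCast _

lemma ev_hf (x : ZMod (2*n)) (hx : pr n x = 0) : ev (hf x) = x := by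
  rw [pr_val, ZMod.natCast_eq_zero_iff] at hx
  have hlt : x.val < 2 * n := x.val_lt
  have h2 : x.val / 2 < n := by omega
  rw [ev, hf, ZMod.val_cast_of_lt h2]
  have : 2 * (x.val / 2) = x.val := by omega
  rw [this, ZMod.natCast_rightInverse x]

lemma od_hf (x : ZMod (2*n)) (hx : pr n x = 1) : od (hf x) = x := by
  have hodd : x.val % 2 = 1 := by
    rcases Nat.mod_two_eq_zero_or_one x.val with h | h
    · exfalso
      rw [pr_val] at hx
      have : ((x.val : ℕ) : ZMod 2) = 0 := by
        rw [ZMod.natCast_eq_zero_iff]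
        omega
      rw [this] at hx
      exact zero_ne_one hx
    · exact h
  have hlt : x.val < 2 * n := x.val_lt
  have h2 : x.val / 2 < n := by omega
  rw [od, hf, ZMod.val_cast_of_lt h2]
  have : 2 * (x.val / 2) + 1 = x.val := by omega
  rw [this, ZMod.natCast_rightInverse x]

lemma zmod2_cases (y : ZMod 2) : y = 0 ∨ y = 1 := by revert y; decide

lemma cast_two_mul_mod (t : ℕ) : ((2 * (t % n) : ℕ) : ZMod (2 * n)) = ((2 * t : ℕ) : ZMod (2 * n)) := by
  conv_rhs => rw [← Nat.div_add_mod t n]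
  have h0 : ((2 * n : ℕ) : ZMod (2 * n)) = 0 := ZMod.natCast_self _
  push_cast at h0 ⊢
  linear_combination (-(t / n : ℕ) : ZMod (2 * n)) * h0

lemma ev_add (a g : ZMod n) : ev (a + g) = ev a + ev g := by
  rw [ev, ZMod.val_add, cast_two_mul_mod, ev, ev]
  push_cast
  ring

lemma od_add (a g : ZMod n) : od (a + g) = od a + ev g := by
  rw [od, ZMod.val_add]
  have : ((2 * ((a.val + g.val) % n) + 1 : ℕ) : ZMod (2*n))
      = ((2 * ((a.val + g.val) % n) : ℕ) : ZMod (2*n)) + 1 := by push_cast; ring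
  rw [this, cast_two_mul_mod, od, ev]
  push_cast
  ring

end EvOd

section Master
variable [NeZero n]

-- components of a matching
def mf (m : SgnColMatch n k) : ZMod (2*n) → ZMod (2*n) := m.1.1
def mc (m : SgnColMatch n k) : ZMod (2*n) → Fin k := m.1.2.1
def me (m : SgnColMatch n k) : ZMod 2 := m.1.2.2

lemma mf_invol (m : SgnColMatch n k) (x) : mf m (mf m x) = x := m.2.1 x
lemma mc_mf (m : SgnColMatch n k) (x) : mc m (mf m x) = mc m x := m.2.2.2.1 x
lemma pr_mf (m : SgnColMatch n k) (x) : pr n (x + mf m x) = 1 := m.2.2.2.2 x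

lemma pr_mf_ev (m : SgnColMatch n k) (a : ZMod n) : pr n (mf m (ev a)) = 1 := by
  have h := pr_mf m (ev a)
  rw [map_add, pr_ev, zero_add] at h
  exact h

lemma pr_mf_od (m : SgnColMatch n k) (a : ZMod n) : pr n (mf m (od a)) = 0 := by
  have h := pr_mf m (od a)
  rw [map_add, pr_od] at h
  rcases zmod2_cases (pr n (mf m (od a))) with h0 | h1
  · exact h0
  · rw [h1] at h; exact absurd h (by decide)

lemma od_hf_mf_ev (m : SgnColMatch n k) (a : ZMod n) :
    od (hf (mf m (ev a))) = mf m (ev a) := od_hf _ (pr_mf_ev m a)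

lemma ev_hf_mf_od (m : SgnColMatch n k) (a : ZMod n) :
    ev (hf (mf m (od a))) = mf m (od a) := ev_hf _ (pr_mf_od m a)

/-- the permutation of `ZMod n` induced by a matching -/
def mσ (m : SgnColMatch n k) : Equiv.Perm (ZMod n) where
  toFun a := hf (mf m (ev a))
  invFun a := hf (mf m (od a))
  left_inv a := by
    simp only
    rw [od_hf_mf_ev, mf_invol, hf_ev]
  right_inv a := by
    simp only
    rw [ev_hf_mf_od, mf_invol, hf_od]

lemma mf_ev (m : SgnColMatch n k) (a : ZMod n) : mf m (ev a) = od (mσ m a) :=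
  (od_hf_mf_ev m a).symm

lemma mf_od (m : SgnColMatch n k) (a : ZMod n) : mf m (od a) = ev ((mσ m).symm a) :=
  (ev_hf_mf_od m a).symm

def mc₀ (m : SgnColMatch n k) : ZMod n → Fin k := fun a => mc m (ev a)

lemma mc_od (m : SgnColMatch n k) (a : ZMod n) : mc m (od a) = mc₀ m ((mσ m).symm a) := by
  have : od a = mf m (ev ((mσ m).symm a)) := by
    rw [mf_ev, Equiv.apply_symm_apply]
  rw [this, mc_mf]
  rfl

def bf (σ : Equiv.Perm (ZMod n)) : ZMod (2*n) → ZMod (2*n) :=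
  fun x => if pr n x = 0 then od (σ (hf x)) else ev (σ.symm (hf x))

def bc (σ : Equiv.Perm (ZMod n)) (c₀ : ZMod n → Fin k) : ZMod (2*n) → Fin k :=
  fun x => if pr n x = 0 then c₀ (hf x) else c₀ (σ.symm (hf x))

lemma bf_ev (σ : Equiv.Perm (ZMod n)) (a : ZMod n) : bf σ (ev a) = od (σ a) := by
  rw [bf, if_pos (pr_ev a), hf_ev]

lemma bf_od (σ : Equiv.Perm (ZMod n)) (a : ZMod n) : bf σ (od a) = ev (σ.symm a) := by
  rw [bf, if_neg (by rw [pr_od]; exact one_ne_zero), hf_od]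

lemma bc_ev (σ : Equiv.Perm (ZMod n)) (c₀ : ZMod n → Fin k) (a : ZMod n) :
    bc σ c₀ (ev a) = c₀ a := by
  rw [bc, if_pos (pr_ev a), hf_ev]

lemma bc_od (σ : Equiv.Perm (ZMod n)) (c₀ : ZMod n → Fin k) (a : ZMod n) :
    bc σ c₀ (od a) = c₀ (σ.symm a) := by
  rw [bc, if_neg (by rw [pr_od]; exact one_ne_zero), hf_od]

lemma parity_cases (x : ZMod (2*n)) (P : ZMod (2*n) → Prop)
    (h0 : ∀ a, P (ev a)) (h1 : ∀ a, P (od a)) : P x := by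
  rcases zmod2_cases (pr n x) with hx | hx
  · rw [← ev_hf x hx]; exact h0 _
  · rw [← od_hf x hx]; exact h1 _

/-- build a matching from data -/
def build (σ : Equiv.Perm (ZMod n)) (c₀ : ZMod n → Fin k) (ε : ZMod 2) : SgnColMatch n k :=
  ⟨(bf σ, bc σ c₀, ε), by
    refine ⟨fun x => ?_, fun x => ?_, fun x => ?_, fun x => ?_⟩ <;> simp only
    · induction x using parity_cases with
      | h0 a => rw [bf_ev, bf_od, Equiv.symm_apply_apply]
      | h1 a => rw [bf_od, bf_ev, Equiv.apply_symm_apply]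
    · induction x using parity_cases with
      | h0 a =>
        rw [bf_ev]
        intro h
        have := congrArg (pr n) h
        rw [pr_od, pr_ev] at this
        exact one_ne_zero this
      | h1 a =>
        rw [bf_od]
        intro h
        have := congrArg (pr n) h
        rw [pr_od, pr_ev] at this
        exact one_ne_zero this.symm
    · induction x using parity_cases with
      | h0 a => rw [bf_ev, bc_od, bc_ev, Equiv.symm_apply_apply]
      | h1 a => rw [bf_od, bc_ev, bc_od]
    · induction x using parity_cases with
      | h0 a => rw [bf_ev, map_add, pr_ev, pr_od, zero_add]
      | h1 a => rw [bf_od, map_add, pr_ev, pr_od, add_zero]⟩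

/-- the master equivalence -/
def E : SgnColMatch n k ≃ Equiv.Perm (ZMod n) × (ZMod n → Fin k) × ZMod 2 where
  toFun m := (mσ m, mc₀ m, me m)
  invFun y := build y.1 y.2.1 y.2.2
  left_inv m := by
    apply Subtype.ext
    refine Prod.ext ?_ (Prod.ext ?_ ?_)
    · funext x
      show bf (mσ m) x = mf m x
      induction x using parity_cases with
      | h0 a => rw [bf_ev, mf_ev]
      | h1 a => rw [bf_od, mf_od]
    · funext x
      show bc (mσ m) (mc₀ m) x = mc m x
      induction x using parity_cases with
      | h0 a => rw [bc_ev]; rfl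
      | h1 a => rw [bc_od, mc_od]
    · rfl
  right_inv y := by
    obtain ⟨σ, c₀, ε⟩ := y
    refine Prod.ext ?_ (Prod.ext ?_ ?_)
    · apply Equiv.ext fun a => ?_
      show hf (bf σ (ev a)) = σ a
      rw [bf_ev, hf_od]
    · funext a
      show bc σ c₀ (ev a) = c₀ a
      rw [bc_ev]
    · rfl

end Master

section Fixed
variable [NeZero n]

lemma vadd_eq_iff (h : ZMod (2*n)) (m : SgnColMatch n k) :
    h +ᵥ m = m ↔ ((∀ x, mf m (x - h) + h = mf m x) ∧ (∀ x, mc m (x - h) = mc m x) ∧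
      me m + pr n h = me m) := by
  rw [vadd_def, act]
  refine Subtype.ext_iff.trans ?_
  rw [Prod.ext_iff, Prod.ext_iff]
  simp only [funext_iff]
  tauto

lemma ev_sub (a g : ZMod n) : ev a - ev g = ev (a - g) := by
  have h := ev_add (a - g) g
  rw [sub_add_cancel] at h
  rw [h]; ring

lemma od_sub (a g : ZMod n) : od a - ev g = od (a - g) := by
  have h := od_add (a - g) g
  rw [sub_add_cancel] at h
  rw [h]; ring

lemma symm_comm (σ : Equiv.Perm (ZMod n)) (g : ZMod n) (h : ∀ a, σ (a + g) = σ a + g) :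
    ∀ a, σ.symm (a + g) = σ.symm a + g := fun a =>
  σ.injective (by rw [Equiv.apply_symm_apply, h, Equiv.apply_symm_apply])

lemma fixed_iff (g : ZMod n) (m : SgnColMatch n k) :
    (ev g) +ᵥ m = m ↔
      ((∀ a, mσ m (a + g) = mσ m a + g) ∧ (∀ a, mc₀ m (a + g) = mc₀ m a)) := by
  rw [vadd_eq_iff]
  constructor
  · rintro ⟨Hf, Hc, -⟩
    constructor
    · intro a
      have h1 : mf m (ev a) + ev g = mf m (ev a + ev g) := by
        have := Hf (ev a + ev g)
        rwa [add_sub_cancel_right] at this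
      have h2 : od (mσ m (a + g)) = od (mσ m a + g) := by
        rw [← mf_ev, ev_add, ← h1, mf_ev, ← od_add]
      have := congrArg hf h2
      rwa [hf_od, hf_od] at this
    · intro a
      have := Hc (ev a + ev g)
      rw [add_sub_cancel_right, ← ev_add] at this
      rw [mc₀, mc₀, ← this]
  · rintro ⟨hσ, hc⟩
    refine ⟨fun x => ?_, fun x => ?_, by rw [pr_ev, add_zero]⟩
    · induction x using parity_cases with
      | h0 a =>
        rw [ev_sub, mf_ev, mf_ev, ← od_add, ← hσ, sub_add_cancel]
      | h1 a =>
        rw [od_sub, mf_od, mf_od, ← ev_add, ← symm_comm _ _ hσ, sub_add_cancel]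
    · induction x using parity_cases with
      | h0 a =>
        rw [ev_sub]
        show mc₀ m (a - g) = mc₀ m a
        conv_rhs => rw [← sub_add_cancel a g, hc]
      | h1 a =>
        rw [od_sub, mc_od, mc_od]
        conv_rhs => rw [← sub_add_cancel a g, symm_comm _ _ hσ, hc]

lemma fix_od_empty (g : ZMod n) (m : SgnColMatch n k) : ¬ ((od g) +ᵥ m = m) := by
  rw [vadd_eq_iff]
  rintro ⟨-, -, h⟩
  rw [pr_od] at h
  exact one_ne_zero (add_left_cancel (h.trans (add_zero (me m)).symm))

end Fixed

section Count
variable (e d : ℕ) [NeZero e] [NeZero d]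

instance : NeZero (e * d) := ⟨Nat.mul_ne_zero (NeZero.ne e) (NeZero.ne d)⟩

def ee : ZMod e × ZMod d ≃ ZMod (e * d) where
  toFun p := ((p.1.val + e * p.2.val : ℕ) : ZMod (e * d))
  invFun x := (((x.val % e : ℕ) : ZMod e), ((x.val / e : ℕ) : ZMod d))
  left_inv p := by
    obtain ⟨r, j⟩ := p
    simp only
    have he : 0 < e := Nat.pos_of_ne_zero (NeZero.ne e)
    have h1 : r.val < e := r.val_lt
    have h2 : j.val < d := j.val_lt
    have hlt : r.val + e * j.val < e * d := by
      calc r.val + e * j.val < e * (j.val + 1) := by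
            have : e * (j.val + 1) = e * j.val + e := by ring
            omega
      _ ≤ e * d := Nat.mul_le_mul_left e h2
    rw [ZMod.val_cast_of_lt hlt]
    refine Prod.ext ?_ ?_ <;> simp only
    · rw [Nat.add_mul_mod_self_left, Nat.mod_eq_of_lt h1]
      exact ZMod.natCast_rightInverse r
    · rw [Nat.add_mul_div_left _ _ he, Nat.div_eq_of_lt h1, zero_add]
      exact ZMod.natCast_rightInverse j
  right_inv x := by
    simp only
    have he : 0 < e := Nat.pos_of_ne_zero (NeZero.ne e)
    have hx : x.val < e * d := x.val_lt
    have h1 : x.val % e < e := Nat.mod_lt _ he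
    have h2 : x.val / e < d := by
      rw [Nat.div_lt_iff_lt_mul he]
      exact lt_of_lt_of_eq hx (mul_comm e d)
    rw [ZMod.val_cast_of_lt h1, ZMod.val_cast_of_lt h2, Nat.mod_add_div]
    exact ZMod.natCast_rightInverse x

lemma cast_emod (t : ℕ) : ((e * (t % d) : ℕ) : ZMod (e * d)) = ((e * t : ℕ) : ZMod (e * d)) := by
  conv_rhs => rw [← Nat.div_add_mod t d]
  have h0 : ((e * d : ℕ) : ZMod (e * d)) = 0 := ZMod.natCast_self _
  push_cast at h0 ⊢
  linear_combination (-((t / d : ℕ) : ZMod (e * d))) * h0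

lemma ee_nat (r : ZMod e) (t : ℕ) :
    ee e d (r, ((t : ℕ) : ZMod d)) = ((r.val + e * t : ℕ) : ZMod (e * d)) := by
  show ((r.val + e * ((t : ZMod d)).val : ℕ) : ZMod (e * d)) = _
  rw [ZMod.val_natCast, Nat.cast_add, Nat.cast_add, cast_emod]

lemma ee_shift (r : ZMod e) (j : ZMod d) :
    ee e d (r, j + 1) = ee e d (r, j) + (e : ZMod (e * d)) := by
  have hj : j = ((j.val : ℕ) : ZMod d) := (ZMod.natCast_rightInverse j).symm
  rw [hj]
  have : ((j.val : ℕ) : ZMod d) + 1 = ((j.val + 1 : ℕ) : ZMod d) := by push_cast; ring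
  rw [this, ee_nat, ee_nat]
  push_cast
  ring

lemma symm_shift (x : ZMod (e * d)) :
    (ee e d).symm (x + (e : ZMod (e * d))) = (((ee e d).symm x).1, ((ee e d).symm x).2 + 1) := by
  apply (ee e d).injective
  rw [Equiv.apply_symm_apply]
  have := ee_shift e d ((ee e d).symm x).1 ((ee e d).symm x).2
  rw [Prod.mk.eta, Equiv.apply_symm_apply] at this
  rw [this]

lemma F_ee {α : Sort*} (F : ZMod (e * d) → α) (hF : ∀ x, F (x + (e : ZMod (e * d))) = F x)
    (r : ZMod e) (j : ZMod d) : F (ee e d (r, j)) = F (ee e d (r, 0)) := by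
  have key : ∀ t : ℕ, F (ee e d (r, ((t : ℕ) : ZMod d))) = F (ee e d (r, 0)) := by
    intro t
    induction t with
    | zero => norm_num
    | succ t ih =>
      have : ((t + 1 : ℕ) : ZMod d) = ((t : ℕ) : ZMod d) + 1 := by push_cast; ring
      rw [this, ee_shift, hF, ih]
  have := key j.val
  rwa [ZMod.natCast_rightInverse j] at this

lemma psi_key (ψ : Equiv.Perm (ZMod e × ZMod d))
    (hψ : ∀ p : ZMod e × ZMod d, ψ (p.1, p.2 + 1) = ((ψ p).1, (ψ p).2 + 1))
    (r : ZMod e) (j : ZMod d) : ψ (r, j) = ((ψ (r, 0)).1, (ψ (r, 0)).2 + j) := by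
  have key : ∀ t : ℕ, ψ (r, ((t : ℕ) : ZMod d)) = ((ψ (r, 0)).1, (ψ (r, 0)).2 + t) := by
    intro t
    induction t with
    | zero => norm_num
    | succ t ih =>
      have h1 : ((t + 1 : ℕ) : ZMod d) = ((t : ℕ) : ZMod d) + 1 := by push_cast; ring
      rw [h1]
      have := hψ (r, ((t : ℕ) : ZMod d))
      rw [this, ih]
      push_cast
      rw [add_assoc]
  have := key j.val
  rwa [ZMod.natCast_rightInverse j] at this

noncomputable def commPermEquiv :
    {ψ : Equiv.Perm (ZMod e × ZMod d) //
      ∀ p : ZMod e × ZMod d, ψ (p.1, p.2 + 1) = ((ψ p).1, (ψ p).2 + 1)} ≃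
    Equiv.Perm (ZMod e) × (ZMod e → ZMod d) where
  toFun ψh := by
    refine ⟨Equiv.ofBijective (fun r => (ψh.1 (r, 0)).1) ?_, fun r => (ψh.1 (r, 0)).2⟩
    rw [← Finite.injective_iff_bijective]
    intro r r' hrr
    have hrr' : (ψh.1 (r, 0)).1 = (ψh.1 (r', 0)).1 := hrr
    have h2 := psi_key e d ψh.1 ψh.2 r' ((ψh.1 (r, 0)).2 - (ψh.1 (r', 0)).2)
    have key : ψh.1 (r', (ψh.1 (r, 0)).2 - (ψh.1 (r', 0)).2) = ψh.1 (r, 0) := by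
      rw [h2, add_sub_cancel, ← hrr']
    have := ψh.1.injective key
    exact (congrArg Prod.fst this).symm
  invFun p := ⟨Equiv.prodShear p.1 (fun r => Equiv.addLeft (p.2 r)), by
    rintro ⟨r, j⟩
    show (p.1 r, p.2 r + (j + 1)) = (p.1 r, p.2 r + j + 1)
    rw [add_assoc]⟩
  left_inv ψh := by
    apply Subtype.ext
    apply Equiv.ext
    rintro ⟨r, j⟩
    show ((ψh.1 (r, 0)).1, (ψh.1 (r, 0)).2 + j) = ψh.1 (r, j)
    exact (psi_key e d ψh.1 ψh.2 r j).symm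
  right_inv p := by
    refine Prod.ext (Equiv.ext fun r => ?_) (funext fun r => ?_)
    · show (p.1 r, p.2 r + 0).1 = p.1 r
      rfl
    · show (p.1 r, p.2 r + 0).2 = p.2 r
      simp

noncomputable def commSigmaEquiv :
    {σ : Equiv.Perm (ZMod (e * d)) // ∀ a, σ (a + (e : ZMod (e * d))) = σ a + e} ≃
    Equiv.Perm (ZMod e) × (ZMod e → ZMod d) := by
  refine (Equiv.subtypeEquiv (Equiv.permCongr (ee e d).symm) fun σ => ?_).trans
    (commPermEquiv e d)
  constructor
  · intro hσ p
    simp only [Equiv.permCongr_apply, Equiv.symm_symm]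
    rw [ee_shift, Prod.mk.eta, hσ, symm_shift]
  · intro hψ x
    have h1 := hψ ((ee e d).symm x)
    simp only [Equiv.permCongr_apply, Equiv.symm_symm] at h1
    have h2 : σ (ee e d (((ee e d).symm x).1, ((ee e d).symm x).2 + 1)) = σ x + e := by
      apply (ee e d).symm.injective
      rw [h1, symm_shift, Equiv.apply_symm_apply]
    rwa [ee_shift, Prod.mk.eta, Equiv.apply_symm_apply] at h2

lemma card_comm_perm :
    Nat.card {σ : Equiv.Perm (ZMod (e * d)) // ∀ a, σ (a + (e : ZMod (e * d))) = σ a + e}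
      = e.factorial * d ^ e := by
  rw [Nat.card_congr (commSigmaEquiv e d), Nat.card_prod, Nat.card_fun]
  rw [Nat.card_eq_fintype_card, Fintype.card_perm, Nat.card_zmod, Nat.card_zmod]
  congr 1
  rw [Fintype.card_eq_nat_card, Nat.card_zmod]

def invColEquiv :
    {c : ZMod (e * d) → Fin k // ∀ a, c (a + (e : ZMod (e * d))) = c a} ≃
    (ZMod e → Fin k) where
  toFun c := fun r => c.1 (ee e d (r, 0))
  invFun w := ⟨fun x => w ((ee e d).symm x).1, fun a => by
    simp only
    rw [symm_shift]⟩
  left_inv c := by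
    apply Subtype.ext
    funext x
    show c.1 (ee e d (((ee e d).symm x).1, 0)) = c.1 x
    rw [← F_ee e d c.1 c.2 ((ee e d).symm x).1 ((ee e d).symm x).2, Prod.mk.eta,
      Equiv.apply_symm_apply]
  right_inv w := by
    funext r
    show w ((ee e d).symm (ee e d (r, 0))).1 = w r
    rw [Equiv.symm_apply_apply]

lemma card_inv_col :
    Nat.card {c : ZMod (e * d) → Fin k // ∀ a, c (a + (e : ZMod (e * d))) = c a} = k ^ e := by
  rw [Nat.card_congr (invColEquiv e d), Nat.card_fun, Nat.card_eq_fintype_card,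
    Fintype.card_fin, Nat.card_zmod]

end Count

section PerG
variable [NeZero n]

lemma val_cast (a : ZMod n) : ((a.val : ℕ) : ZMod n) = a := ZMod.natCast_rightInverse a

def commSet (σ : Equiv.Perm (ZMod n)) : AddSubgroup (ZMod n) where
  carrier := {x | ∀ a, σ (a + x) = σ a + x}
  zero_mem' := by simp
  add_mem' {x y} hx hy a := by rw [← add_assoc, hy, hx, add_assoc]
  neg_mem' {x} hx a := by
    have h := hx (a + -x)
    rw [add_assoc, neg_add_cancel, add_zero] at h
    rw [h]
    ring

def invSet (c : ZMod n → Fin k) : AddSubgroup (ZMod n) where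
  carrier := {x | ∀ a, c (a + x) = c a}
  zero_mem' := by simp
  add_mem' {x y} hx hy a := by rw [← add_assoc, hy, hx]
  neg_mem' {x} hx a := by
    have h := hx (a + -x)
    rw [add_assoc, neg_add_cancel, add_zero] at h
    rw [h]

lemma mem_iff_of_zmult {A : AddSubgroup (ZMod n)} {x y : ZMod n}
    (hx : x ∈ AddSubgroup.zmultiples y) (hy : y ∈ AddSubgroup.zmultiples x) :
    x ∈ A ↔ y ∈ A := by
  constructor
  · intro h
    obtain ⟨m, rfl⟩ := AddSubgroup.mem_zmultiples_iff.mp hy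
    exact A.zsmul_mem h m
  · intro h
    obtain ⟨m, rfl⟩ := AddSubgroup.mem_zmultiples_iff.mp hx
    exact A.zsmul_mem h m

def splitEquiv {α β γ : Type*} (P : α → Prop) (Q : β → Prop) :
    {y : α × β × γ // P y.1 ∧ Q y.2.1} ≃ ({a // P a} × {b // Q b} × γ) where
  toFun y := (⟨y.1.1, y.2.1⟩, ⟨y.1.2.1, y.2.2⟩, y.1.2.2)
  invFun z := ⟨(z.1.1, z.2.1.1, z.2.2), z.1.2, z.2.1.2⟩
  left_inv := fun ⟨⟨a, b, c⟩, h⟩ => rfl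
  right_inv := fun ⟨⟨a, _⟩, ⟨b, _⟩, c⟩ => rfl

lemma exists_ed (hn0 : n ≠ 0) (g : ZMod n) :
    ∃ e dd : ℕ, 0 < e ∧ 0 < dd ∧ n = e * dd ∧ addOrderOf g = dd ∧
      g ∈ AddSubgroup.zmultiples ((e : ZMod n)) ∧
      ((e : ZMod n)) ∈ AddSubgroup.zmultiples g := by
  refine ⟨n.gcd g.val, addOrderOf g, ?_, ?_, ?_, rfl, ?_, ?_⟩
  · exact Nat.pos_of_ne_zero fun h => hn0 (Nat.eq_zero_of_gcd_eq_zero_left h)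
  · exact addOrderOf_pos g
  · have h1 : addOrderOf g = n / n.gcd g.val := by
      conv_lhs => rw [← val_cast g]
      exact ZMod.addOrderOf_coe g.val hn0
    rw [h1]
    exact (Nat.mul_div_cancel' (Nat.gcd_dvd_left n g.val)).symm
  · obtain ⟨t, ht⟩ := Nat.gcd_dvd_right n g.val
    rw [AddSubgroup.mem_zmultiples_iff]
    refine ⟨t, ?_⟩
    have hg : g = ((n.gcd g.val * t : ℕ) : ZMod n) := by rw [← ht, val_cast]
    conv_rhs => rw [hg]
    rw [zsmul_eq_mul]
    push_cast
    ring
  · rw [AddSubgroup.mem_zmultiples_iff]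
    refine ⟨Nat.gcdB n g.val, ?_⟩
    have hb := Nat.gcd_eq_gcd_ab n g.val
    have := congrArg (fun t : ℤ => ((t : ℤ) : ZMod n)) hb
    push_cast at this
    rw [ZMod.natCast_self, val_cast] at this
    rw [zsmul_eq_mul, this]
    ring

lemma card_fix_ev (g : ZMod n) :
    Nat.card {m : SgnColMatch n k // (ev g) +ᵥ m = m}
      = 2 * ((n / addOrderOf g).factorial * (addOrderOf g) ^ (n / addOrderOf g)
          * k ^ (n / addOrderOf g)) := by
  obtain ⟨e, dd, he, hd, hed, hdord, hgmem, hemem⟩ := exists_ed (NeZero.ne n) g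
  rw [hdord]
  have hnd : n / dd = e := by rw [hed, Nat.mul_div_cancel _ hd]
  rw [hnd]
  have step1 : Nat.card {m : SgnColMatch n k // (ev g) +ᵥ m = m}
      = Nat.card {y : Equiv.Perm (ZMod n) × (ZMod n → Fin k) × ZMod 2 //
          (∀ a, y.1 (a + (e : ZMod n)) = y.1 a + e) ∧ (∀ a, y.2.1 (a + (e : ZMod n)) = y.2.1 a)} := by
    apply Nat.card_congr
    refine Equiv.subtypeEquiv E fun m => ?_
    rw [fixed_iff]
    constructor
    · rintro ⟨h1, h2⟩
      exact ⟨fun a => (mem_iff_of_zmult (A := commSet (mσ m)) hgmem hemem).mp h1 a,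
        fun a => (mem_iff_of_zmult (A := invSet (mc₀ m)) hgmem hemem).mp h2 a⟩
    · rintro ⟨h1, h2⟩
      exact ⟨fun a => (mem_iff_of_zmult (A := commSet (mσ m)) hgmem hemem).mpr h1 a,
        fun a => (mem_iff_of_zmult (A := invSet (mc₀ m)) hgmem hemem).mpr h2 a⟩
  have step2 : Nat.card {y : Equiv.Perm (ZMod n) × (ZMod n → Fin k) × ZMod 2 //
          (∀ a, y.1 (a + (e : ZMod n)) = y.1 a + e) ∧ (∀ a, y.2.1 (a + (e : ZMod n)) = y.2.1 a)}
      = Nat.card {σ : Equiv.Perm (ZMod n) // ∀ a, σ (a + (e : ZMod n)) = σ a + e}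
        * (Nat.card {c : ZMod n → Fin k // ∀ a, c (a + (e : ZMod n)) = c a} * Nat.card (ZMod 2)) :=
    (Nat.card_congr (splitEquiv (γ := ZMod 2)
        (fun σ : Equiv.Perm (ZMod n) => ∀ a, σ (a + (e : ZMod n)) = σ a + e)
        (fun c : ZMod n → Fin k => ∀ a, c (a + (e : ZMod n)) = c a))).trans
      (by rw [Nat.card_prod, Nat.card_prod])
  rw [step1, step2]
  subst hed
  haveI : NeZero e := ⟨he.ne'⟩
  haveI : NeZero dd := ⟨hd.ne'⟩
  rw [card_comm_perm e dd, card_inv_col e dd, Nat.card_zmod]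
  ring

end PerG

section Final
variable [NeZero n]

instance : Finite (SgnColMatch n k) := by
  unfold SgnColMatch
  exact Subtype.finite

noncomputable instance : Fintype (SgnColMatch n k) := Fintype.ofFinite _

def EO : ZMod n ⊕ ZMod n ≃ ZMod (2 * n) where
  toFun := Sum.elim ev od
  invFun x := if pr n x = 0 then Sum.inl (hf x) else Sum.inr (hf x)
  left_inv y := by
    rcases y with a | a
    · simp only [Sum.elim_inl]
      show (if pr n (ev a) = 0 then Sum.inl (hf (ev a)) else Sum.inr (hf (ev a))) = Sum.inl a
      rw [if_pos (pr_ev a), hf_ev]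
    · simp only [Sum.elim_inr]
      show (if pr n (od a) = 0 then Sum.inl (hf (od a)) else Sum.inr (hf (od a))) = Sum.inr a
      rw [if_neg (by rw [pr_od]; exact one_ne_zero), hf_od]
  right_inv x := by
    show Sum.elim ev od (if pr n x = 0 then Sum.inl (hf x) else Sum.inr (hf x)) = x
    rcases zmod2_cases (pr n x) with hx | hx
    · rw [if_pos hx]
      exact ev_hf x hx
    · rw [if_neg (by rw [hx]; exact one_ne_zero)]
      exact od_hf x hx

lemma orbit_set_eq (m : SgnColMatch n k) :
    {m' : SgnColMatch n k | ∃ h : ZMod (2 * n),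
        m'.val.1 = (fun x => m.val.1 (x - h) + h) ∧
        m'.val.2.1 = (fun x => m.val.2.1 (x - h)) ∧
        m'.val.2.2 = m.val.2.2 + ZMod.castHom (dvd_mul_right 2 n) (ZMod 2) h}
      = AddAction.orbit (ZMod (2 * n)) m := by
  ext m'
  constructor
  · rintro ⟨h, h1, h2, h3⟩
    exact ⟨h, Subtype.ext (Prod.ext h1.symm (Prod.ext h2.symm h3.symm))⟩
  · rintro ⟨h, rfl⟩
    exact ⟨h, rfl, rfl, rfl⟩

lemma card_orbit_sets :
    Nat.card {s : Set (SgnColMatch n k) //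
      ∃ m : SgnColMatch n k, s = {m' : SgnColMatch n k | ∃ h : ZMod (2 * n),
        m'.val.1 = (fun x => m.val.1 (x - h) + h) ∧
        m'.val.2.1 = (fun x => m.val.2.1 (x - h)) ∧
        m'.val.2.2 = m.val.2.2 + ZMod.castHom (dvd_mul_right 2 n) (ZMod 2) h}}
      = Nat.card (Quotient (AddAction.orbitRel (ZMod (2 * n)) (SgnColMatch n k))) := by
  apply Nat.card_congr
  apply Equiv.symm
  refine Equiv.ofBijective (fun q => Quotient.liftOn' q
    (fun m => ⟨AddAction.orbit (ZMod (2 * n)) m, m, (orbit_set_eq m).symm⟩)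
    (fun m₁ m₂ hrel => Subtype.ext (AddAction.orbit_eq_iff.mpr hrel))) ⟨?_, ?_⟩
  · intro q₁ q₂ hq
    induction q₁ using Quotient.inductionOn' with | h m₁ =>
    induction q₂ using Quotient.inductionOn' with | h m₂ =>
    have : AddAction.orbit (ZMod (2 * n)) m₁ = AddAction.orbit (ZMod (2 * n)) m₂ :=
      congrArg Subtype.val hq
    exact Quotient.sound' (AddAction.orbit_eq_iff.mp this)
  · rintro ⟨s, m, rfl⟩
    exact ⟨Quotient.mk'' m, Subtype.ext (orbit_set_eq m).symm⟩

lemma sum_by_order (F : ℕ → ℕ) :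
    ∑ g : ZMod n, F (addOrderOf g) = ∑ d ∈ n.divisors, d.totient * F d := by
  classical
  rw [← Finset.sum_fiberwise_of_maps_to' (t := n.divisors)
    (g := fun g : ZMod n => addOrderOf g) (f := F) ?maps]
  case maps =>
    intro g _
    rw [Nat.mem_divisors]
    refine ⟨?_, NeZero.ne n⟩
    have := addOrderOf_dvd_card (x := g)
    rwa [ZMod.card] at this
  refine Finset.sum_congr rfl fun d hd => ?_
  rw [Finset.sum_const, smul_eq_mul]
  congr 1
  have hdvd : d ∣ Fintype.card (ZMod n) := by
    rw [ZMod.card]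
    exact (Nat.mem_divisors.mp hd).1
  have := IsAddCyclic.card_addOrderOf_eq_totient (α := ZMod n) hdvd
  convert this using 2

lemma EO_inl (a : ZMod n) : EO (Sum.inl a) = ev a := rfl
lemma EO_inr (a : ZMod n) : EO (Sum.inr a) = od a := rfl

end Final

end S19

open S19

/-- Let `n, k ≥ 1`.  Consider the triples `(f, c, ε)` where `(f, c)` is a `k`-colored
perfect matching on `ℤ/2nℤ` with `x + f(x)` odd for every `x`, and `ε ∈ ℤ/2ℤ`, with the
action of `ℤ/2nℤ` given by `h·(f, c, ε) = (x ↦ f(x-h)+h, x ↦ c(x-h), ε + h̄)`.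
The number `N` of orbits satisfies `n·N = Σ_{d ∣ n} φ(d)·(n/d)!·d^{n/d}·k^{n/d}`. -/
theorem stmt_19 (n k : ℕ) (hn : 1 ≤ n) (hk : 1 ≤ k) (N : ℕ)
    (hN : N = Nat.card {s : Set (SgnColMatch n k) //
      ∃ m : SgnColMatch n k, s = {m' : SgnColMatch n k | ∃ h : ZMod (2 * n),
        m'.val.1 = (fun x => m.val.1 (x - h) + h) ∧
        m'.val.2.1 = (fun x => m.val.2.1 (x - h)) ∧
        m'.val.2.2 = m.val.2.2 + ZMod.castHom (dvd_mul_right 2 n) (ZMod 2) h}}) :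
    n * N = ∑ d ∈ n.divisors,
      d.totient * (n / d).factorial * d ^ (n / d) * k ^ (n / d) := by
  haveI : NeZero n := ⟨by omega⟩
  classical
  haveI instF : ∀ a : ZMod (2 * n), Fintype (AddAction.fixedBy (SgnColMatch n k) a) :=
    fun a => Fintype.ofFinite _
  haveI : Fintype (Quotient (AddAction.orbitRel (ZMod (2 * n)) (SgnColMatch n k))) :=
    Fintype.ofFinite _
  have burn := AddAction.sum_card_fixedBy_eq_card_orbits_mul_card_addGroup
    (ZMod (2 * n)) (SgnColMatch n k)
  have hNcard : N
      = Fintype.card (Quotient (AddAction.orbitRel (ZMod (2 * n)) (SgnColMatch n k))) := by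
    rw [hN, card_orbit_sets, Nat.card_eq_fintype_card]
  have hfix_ev : ∀ g : ZMod n, Fintype.card (AddAction.fixedBy (SgnColMatch n k) (ev g))
      = 2 * ((n / addOrderOf g).factorial * (addOrderOf g) ^ (n / addOrderOf g)
          * k ^ (n / addOrderOf g)) := by
    intro g
    rw [← Nat.card_eq_fintype_card,
      show Nat.card (AddAction.fixedBy (SgnColMatch n k) (ev g))
        = Nat.card {m : SgnColMatch n k // ev g +ᵥ m = m} from
        Nat.card_congr (Equiv.subtypeEquivRight fun m => Iff.rfl)]
    exact card_fix_ev g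
  have hfix_od : ∀ g : ZMod n,
      Fintype.card (AddAction.fixedBy (SgnColMatch n k) (od g)) = 0 := by
    intro g
    rw [Fintype.card_eq_zero_iff]
    exact ⟨fun mp => fix_od_empty g mp.1 mp.2⟩
  have hsum : (∑ a : ZMod (2 * n), Fintype.card (AddAction.fixedBy (SgnColMatch n k) a))
      = 2 * ∑ d ∈ n.divisors,
          d.totient * ((n / d).factorial * d ^ (n / d) * k ^ (n / d)) := by
    rw [← Equiv.sum_comp EO (fun a => Fintype.card (AddAction.fixedBy (SgnColMatch n k) a)),
      Fintype.sum_sum_type]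
    have e1 : ∀ g : ZMod n,
        Fintype.card (AddAction.fixedBy (SgnColMatch n k) (EO (Sum.inr g))) = 0 :=
      fun g => hfix_od g
    have e2 : ∀ g : ZMod n, Fintype.card (AddAction.fixedBy (SgnColMatch n k) (EO (Sum.inl g)))
        = 2 * ((n / addOrderOf g).factorial * (addOrderOf g) ^ (n / addOrderOf g)
            * k ^ (n / addOrderOf g)) := fun g => hfix_ev g
    rw [Finset.sum_eq_zero (fun g _ => e1 g), add_zero]
    rw [Finset.sum_congr rfl (fun g _ => e2 g), ← Finset.mul_sum]
    congr 1
    exact sum_by_order (fun d => (n / d).factorial * d ^ (n / d) * k ^ (n / d))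
  rw [hNcard]
  have h2 : (2 : ℕ) * (∑ d ∈ n.divisors,
        d.totient * ((n / d).factorial * d ^ (n / d) * k ^ (n / d)))
      = 2 * (n * Fintype.card
          (Quotient (AddAction.orbitRel (ZMod (2 * n)) (SgnColMatch n k)))) := by
    rw [← hsum, burn, ZMod.card]
    ring
  have h3 := Nat.eq_of_mul_eq_mul_left (by norm_num : 0 < 2) h2
  rw [← h3]
  exact Finset.sum_congr rfl fun d _ => by ring
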